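/- If a graph G' is obtained from a (2,2)-circuit G by a 1-extension (deleting an edge xy and adding a new vertex v adjacent to x, y, and some third vertex z), then G' is also a (2,2)-circuit. -/

import Mathlib

/-- A graph `G` on the finite vertex type `V` is a `(2,2)`-circuit if
`|E| = 2|V| - 1` and every proper subgraph `(V',E')` with `E'` nonempty
satisfies `|E'| ≤ 2|V'| - 2`. -/
def IsCircuit22 {V : Type*} [Fintype V] (G : SimpleGraph V) : Prop :=
  G.edgeSet.ncard + 1 = 2 * Fintype.card V ∧
  ∀ H : G.Subgraph, (H.verts ≠ Set.univ ∨ H.edgeSet ≠ G.edgeSet) →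
    H.edgeSet.Nonempty → H.edgeSet.ncard + 2 ≤ 2 * H.verts.ncard

/-- If `G'` is obtained from a `(2,2)`-circuit `G` by a `1`-extension (delete the
edge `xy`, add a new vertex — here `none : Option V` — adjacent to `x`, `y` and a
third vertex `z`), then `G'` is also a `(2,2)`-circuit. -/
theorem oneExtension_circuit22 {V : Type*} [Fintype V] [DecidableEq V]
    (G : SimpleGraph V) (hG : IsCircuit22 G)
    (x y z : V) (hxy : G.Adj x y) (hzx : z ≠ x) (hzy : z ≠ y)
    (G' : SimpleGraph (Option V))
    (hold : ∀ a b : V, G'.Adj (some a) (some b) ↔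
      (G.Adj a b ∧ ¬(a = x ∧ b = y) ∧ ¬(a = y ∧ b = x)))
    (hnew : ∀ a : V, G'.Adj (some a) none ↔ (a = x ∨ a = y ∨ a = z)) :
    IsCircuit22 G' := by
  classical
  obtain ⟨hcard, hsparse⟩ := hG
  have hxyE : s(x, y) ∈ G.edgeSet := hxy
  have hxyne : x ≠ y := hxy.ne
  set f : Sym2 V → Sym2 (Option V) := Sym2.map some with hf
  have hfinj : Function.Injective f := Sym2.map.injective (Option.some_injective V)
  have hfpair : ∀ a b : V, f s(a, b) = s(some a, some b) := by
    intro a b; simp [hf]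
  have hnone_f : ∀ s : Sym2 V, (none : Option V) ∉ f s := by
    intro s
    induction s using Sym2.ind with
    | _ a b => rw [hfpair]; simp
  -- description of the edge set of G'
  have hEG' : G'.edgeSet =
      f '' (G.edgeSet \ {s(x, y)}) ∪ {s(none, some x), s(none, some y), s(none, some z)} := by
    ext e
    induction e using Sym2.ind with
    | _ u v =>
      cases u with
      | none =>
        cases v with
        | none =>
          simp only [SimpleGraph.mem_edgeSet, Set.mem_union, Set.mem_image,
            Set.mem_insert_iff, Set.mem_singleton_iff]
          constructor
          · intro h; exact absurd h G'.irrefl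
          · rintro (⟨s, _, hs⟩ | h)
            · exact absurd (hs ▸ Sym2.mem_mk_left none none) (hnone_f s)
            · simp [Sym2.eq_iff] at h
        | some a =>
          simp only [SimpleGraph.mem_edgeSet, Set.mem_union, Set.mem_image,
            Set.mem_insert_iff, Set.mem_singleton_iff]
          constructor
          · intro h
            right
            rcases (hnew a).1 h.symm with rfl | rfl | rfl
            · exact Or.inl rfl
            · exact Or.inr (Or.inl rfl)
            · exact Or.inr (Or.inr rfl)
          · rintro (⟨s, _, hs⟩ | h)
            · exact absurd (hs ▸ Sym2.mem_mk_left none (some a)) (hnone_f s)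
            · have : a = x ∨ a = y ∨ a = z := by
                simpa [Sym2.eq_iff] using h
              exact ((hnew a).2 this).symm
      | some a =>
        cases v with
        | none =>
          simp only [SimpleGraph.mem_edgeSet, Set.mem_union, Set.mem_image,
            Set.mem_insert_iff, Set.mem_singleton_iff]
          constructor
          · intro h
            right
            rcases (hnew a).1 h with rfl | rfl | rfl
            · exact Or.inl (Sym2.eq_swap)
            · exact Or.inr (Or.inl Sym2.eq_swap)
            · exact Or.inr (Or.inr Sym2.eq_swap)
          · rintro (⟨s, _, hs⟩ | h)
            · exact absurd (hs ▸ Sym2.mem_mk_right (some a) none) (hnone_f s)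
            · have : a = x ∨ a = y ∨ a = z := by
                simpa [Sym2.eq_iff] using h
              exact (hnew a).2 this
        | some b =>
          simp only [SimpleGraph.mem_edgeSet, Set.mem_union, Set.mem_image,
            Set.mem_insert_iff, Set.mem_singleton_iff]
          constructor
          · intro h
            left
            refine ⟨s(a, b), ⟨((hold a b).1 h).1, ?_⟩, hfpair a b⟩
            obtain ⟨-, h1, h2⟩ := (hold a b).1 h
            simp only [Set.mem_singleton_iff, Sym2.eq_iff]
            tauto
          · rintro (⟨s, hs, hse⟩ | h)
            · have hseq : s = s(a, b) := hfinj (by rw [hse, hfpair])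
              subst hseq
              obtain ⟨hGab, hne⟩ := hs
              rw [Set.mem_singleton_iff] at hne
              refine (hold a b).2 ⟨(SimpleGraph.mem_edgeSet G).1 hGab, ?_, ?_⟩
              · rintro ⟨rfl, rfl⟩; exact hne rfl
              · rintro ⟨rfl, rfl⟩; exact hne Sym2.eq_swap
            · exfalso
              simp [Sym2.eq_iff] at h
  -- cardinalities for the whole graph
  have hdiff : (G.edgeSet \ {s(x, y)}).ncard + 1 = G.edgeSet.ncard :=
    Set.ncard_diff_singleton_add_one hxyE (Set.toFinite _)
  have himg : (f '' (G.edgeSet \ {s(x, y)})).ncard = (G.edgeSet \ {s(x, y)}).ncard :=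
    Set.ncard_image_of_injective _ hfinj
  have htriple : ({s(none, some x), s(none, some y), s(none, some z)} :
      Set (Sym2 (Option V))).ncard = 3 := by
    rw [Set.ncard_insert_of_notMem (by simp [Sym2.eq_iff, hxyne, hzx.symm]) (Set.toFinite _),
      Set.ncard_insert_of_notMem (by simp [Sym2.eq_iff, hzy.symm]) (Set.toFinite _),
      Set.ncard_singleton]
  have hdisj : Disjoint (f '' (G.edgeSet \ {s(x, y)}))
      ({s(none, some x), s(none, some y), s(none, some z)} : Set (Sym2 (Option V))) := by
    rw [Set.disjoint_left]
    rintro e ⟨s, -, rfl⟩ he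
    have : (none : Option V) ∈ f s := by
      rcases he with h | h | h <;> rw [h] <;> simp
    exact hnone_f s this
  have hcard' : G'.edgeSet.ncard = (G.edgeSet \ {s(x, y)}).ncard + 3 := by
    rw [hEG', Set.ncard_union_eq hdisj (Set.toFinite _) (Set.toFinite _), himg, htriple]
  constructor
  · rw [hcard']
    rw [Fintype.card_option]
    omega
  -- sparsity
  intro H' hproper hne
  set e1 : Sym2 (Option V) := s(none, some x) with he1
  set e2 : Sym2 (Option V) := s(none, some y) with he2
  set e3 : Sym2 (Option V) := s(none, some z) with he3
  set S : Set (Sym2 (Option V)) := H'.edgeSet ∩ {e1, e2, e3} with hSdef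
  -- the restricted subgraph
  set H : G.Subgraph :=
    { verts := some ⁻¹' H'.verts
      Adj := fun a b => H'.Adj (some a) (some b)
      adj_sub := fun h => ((hold _ _).1 (H'.adj_sub h)).1
      edge_vert := fun h => H'.edge_vert h
      symm := ⟨fun a b h => H'.adj_symm h⟩ } with hHdef
  have hHadj : ∀ a b : V, H.Adj a b ↔ H'.Adj (some a) (some b) := fun a b => Iff.rfl
  have hHE : ∀ a b : V, f s(a, b) ∈ H'.edgeSet ↔ s(a, b) ∈ H.edgeSet := by
    intro a b
    rw [hfpair, SimpleGraph.Subgraph.mem_edgeSet, SimpleGraph.Subgraph.mem_edgeSet]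
  have hsub : H'.edgeSet ⊆ f '' H.edgeSet ∪ S := by
    intro e
    induction e using Sym2.ind with
    | _ u v =>
      intro he
      have hadj : H'.Adj u v := (SimpleGraph.Subgraph.mem_edgeSet).1 he
      cases u with
      | none =>
        cases v with
        | none => exact absurd (H'.adj_sub hadj) G'.irrefl
        | some a =>
          right
          refine ⟨he, ?_⟩
          rcases (hnew a).1 (H'.adj_sub hadj).symm with rfl | rfl | rfl
          · exact Or.inl rfl
          · exact Or.inr (Or.inl rfl)
          · exact Or.inr (Or.inr rfl)
      | some a =>
        cases v with
        | none =>
          right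
          refine ⟨he, ?_⟩
          rcases (hnew a).1 (H'.adj_sub hadj) with rfl | rfl | rfl
          · exact Or.inl Sym2.eq_swap
          · exact Or.inr (Or.inl Sym2.eq_swap)
          · exact Or.inr (Or.inr Sym2.eq_swap)
        | some b =>
          left
          exact ⟨s(a, b), SimpleGraph.Subgraph.mem_edgeSet.2 hadj, hfpair a b⟩
  have hEbound : H'.edgeSet.ncard ≤ H.edgeSet.ncard + S.ncard := by
    calc H'.edgeSet.ncard ≤ (f '' H.edgeSet ∪ S).ncard :=
          Set.ncard_le_ncard hsub (Set.toFinite _)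
      _ ≤ (f '' H.edgeSet).ncard + S.ncard := Set.ncard_union_le _ _
      _ = H.edgeSet.ncard + S.ncard := by rw [Set.ncard_image_of_injective _ hfinj]
  have hVsub : some '' H.verts ⊆ H'.verts := by
    rintro u ⟨a, ha, rfl⟩; exact ha
  have hVle : H.verts.ncard ≤ H'.verts.ncard := by
    calc H.verts.ncard = (some '' H.verts).ncard :=
          (Set.ncard_image_of_injective _ (Option.some_injective V)).symm
      _ ≤ H'.verts.ncard := Set.ncard_le_ncard hVsub (Set.toFinite _)
  have hxyH : s(x, y) ∉ H.edgeSet := by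
    intro h
    have := (hold x y).1 (H'.adj_sub (SimpleGraph.Subgraph.mem_edgeSet.1 h))
    exact this.2.1 ⟨rfl, rfl⟩
  have hHproper : H.verts ≠ Set.univ ∨ H.edgeSet ≠ G.edgeSet :=
    Or.inr (fun h => hxyH (h ▸ hxyE))
  by_cases hS : S.Nonempty
  · -- at least one new edge
    have hnoneV : (none : Option V) ∈ H'.verts := by
      obtain ⟨e, heE, heT⟩ := hS
      rcases heT with rfl | rfl | rfl <;>
        exact (SimpleGraph.Subgraph.mem_edgeSet.1 heE).fst_mem
    have hVle1 : H.verts.ncard + 1 ≤ H'.verts.ncard := by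
      have hins : insert (none : Option V) (some '' H.verts) ⊆ H'.verts :=
        Set.insert_subset hnoneV hVsub
      calc H.verts.ncard + 1 = (insert (none : Option V) (some '' H.verts)).ncard := by
            rw [Set.ncard_insert_of_notMem (by simp) (Set.toFinite _),
              Set.ncard_image_of_injective _ (Option.some_injective V)]
        _ ≤ H'.verts.ncard := Set.ncard_le_ncard hins (Set.toFinite _)
    have hS3 : S.ncard ≤ 3 := by
      have h1 : S.ncard ≤ ({e1, e2, e3} : Set (Sym2 (Option V))).ncard :=
        Set.ncard_le_ncard Set.inter_subset_right (Set.toFinite _)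
      have h2 : ({e1, e2, e3} : Set (Sym2 (Option V))).ncard ≤ 3 := by
        refine le_trans (Set.ncard_insert_le _ _) ?_
        have := Set.ncard_insert_le e2 ({e3} : Set (Sym2 (Option V)))
        rw [Set.ncard_singleton] at this
        omega
      omega
    by_cases hall : e1 ∈ H'.edgeSet ∧ e2 ∈ H'.edgeSet ∧ e3 ∈ H'.edgeSet
    · -- all three new edges present: use H plus the edge xy
      obtain ⟨hi1, hi2, hi3⟩ := hall
      have hxH : x ∈ H.verts := (SimpleGraph.Subgraph.mem_edgeSet.1 hi1).snd_mem
      have hyH : y ∈ H.verts := (SimpleGraph.Subgraph.mem_edgeSet.1 hi2).snd_mem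
      set H2 : G.Subgraph := H ⊔ G.subgraphOfAdj hxy with hH2
      have hH2v : H2.verts = H.verts := by
        rw [hH2, SimpleGraph.Subgraph.verts_sup, SimpleGraph.subgraphOfAdj_verts]
        exact Set.union_eq_self_of_subset_right (by
          rintro a (rfl | rfl)
          exacts [hxH, hyH])
      have hH2e : H2.edgeSet = insert s(x, y) H.edgeSet := by
        rw [hH2, SimpleGraph.Subgraph.edgeSet_sup, SimpleGraph.edgeSet_subgraphOfAdj,
          Set.union_singleton]
      have hH2card : H2.edgeSet.ncard = H.edgeSet.ncard + 1 := by
        rw [hH2e, Set.ncard_insert_of_notMem hxyH (Set.toFinite _)]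
      by_cases hP : H2.verts ≠ Set.univ ∨ H2.edgeSet ≠ G.edgeSet
      · have := hsparse H2 hP ⟨s(x, y), by rw [hH2e]; exact Set.mem_insert _ _⟩
        rw [hH2card, hH2v] at this
        omega
      · exfalso
        push_neg at hP
        obtain ⟨hPv, hPe⟩ := hP
        have hHvu : H.verts = Set.univ := by rw [← hH2v, hPv]
        have hV'u : H'.verts = Set.univ := by
          ext u
          simp only [Set.mem_univ, iff_true]
          cases u with
          | none => exact hnoneV
          | some a =>
            have : a ∈ H.verts := hHvu ▸ Set.mem_univ a
            exact this
        have hE'u : H'.edgeSet = G'.edgeSet := by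
          refine Set.Subset.antisymm (SimpleGraph.Subgraph.edgeSet_subset H') ?_
          rw [hEG']
          rintro e (⟨s, hs, rfl⟩ | he)
          · have hsH2 : s ∈ H2.edgeSet := hPe ▸ hs.1
            rw [hH2e] at hsH2
            rcases hsH2 with h | h
            · exact absurd h hs.2
            · induction s using Sym2.ind with
              | _ a b =>
                exact (hHE a b).2 h
          · rcases he with rfl | rfl | rfl
            exacts [hi1, hi2, hi3]
        rcases hproper with h | h
        exacts [h hV'u, h hE'u]
    · -- at most two new edges
      have hS2 : S.ncard ≤ 2 := by
        have hmiss : e1 ∉ H'.edgeSet ∨ e2 ∉ H'.edgeSet ∨ e3 ∉ H'.edgeSet := by tauto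
        obtain ⟨p, q, hpq⟩ : ∃ p q : Sym2 (Option V), S ⊆ {p, q} := by
          rcases hmiss with h | h | h
          · refine ⟨e2, e3, ?_⟩
            rintro e ⟨heE, rfl | rfl | rfl⟩
            exacts [absurd heE h, Or.inl rfl, Or.inr rfl]
          · refine ⟨e1, e3, ?_⟩
            rintro e ⟨heE, rfl | rfl | rfl⟩
            exacts [Or.inl rfl, absurd heE h, Or.inr rfl]
          · refine ⟨e1, e2, ?_⟩
            rintro e ⟨heE, rfl | rfl | rfl⟩
            exacts [Or.inl rfl, Or.inr rfl, absurd heE h]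
        have h1 : S.ncard ≤ ({p, q} : Set (Sym2 (Option V))).ncard :=
          Set.ncard_le_ncard hpq (Set.toFinite _)
        have h2 : ({p, q} : Set (Sym2 (Option V))).ncard ≤ 2 := by
          have := Set.ncard_insert_le p ({q} : Set (Sym2 (Option V)))
          rw [Set.ncard_singleton] at this
          omega
        omega
      by_cases hEH : H.edgeSet.Nonempty
      · have := hsparse H hHproper hEH
        omega
      · -- no old edges: at most 2 edges, at least 2 vertices
        rw [Set.not_nonempty_iff_eq_empty] at hEH
        have hE2 : H'.edgeSet.ncard ≤ 2 := by
          rw [hEH] at hEbound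
          simp at hEbound
          omega
        have hwH : ∃ w, w ∈ H.verts := by
          obtain ⟨e, heE, heT⟩ := hS
          rcases heT with rfl | rfl | rfl
          exacts [⟨x, (SimpleGraph.Subgraph.mem_edgeSet.1 heE).snd_mem⟩,
            ⟨y, (SimpleGraph.Subgraph.mem_edgeSet.1 heE).snd_mem⟩,
            ⟨z, (SimpleGraph.Subgraph.mem_edgeSet.1 heE).snd_mem⟩]
        have hV1 : 1 ≤ H.verts.ncard := by
          obtain ⟨w, hw⟩ := hwH
          have := (Set.ncard_pos (s := H.verts) (Set.toFinite _)).2 ⟨w, hw⟩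
          omega
        omega
  · -- no new edges
    rw [Set.not_nonempty_iff_eq_empty] at hS
    have hsub0 : H'.edgeSet ⊆ f '' H.edgeSet := by
      intro e he
      rcases hsub he with h | h
      · exact h
      · rw [hS] at h; exact absurd h (Set.notMem_empty e)
    have hEH : H.edgeSet.Nonempty := by
      obtain ⟨e, he⟩ := hne
      obtain ⟨s, hs, -⟩ := hsub0 he
      exact ⟨s, hs⟩
    have := hsparse H hHproper hEH
    have hle : H'.edgeSet.ncard ≤ H.edgeSet.ncard := by
      calc H'.edgeSet.ncard ≤ (f '' H.edgeSet).ncard :=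
            Set.ncard_le_ncard hsub0 (Set.toFinite _)
        _ = H.edgeSet.ncard := Set.ncard_image_of_injective _ hfinj
    omega
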